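/- arXiv:2301.12932 — 2 statements merged into one kernel-verified Lean document; each statement's English description precedes it below -/
import Mathlib

section
/- The series ∑_{k=0}^∞ (6k+1) · ((1/2)_k)^3 / (k!^3 · 4^k) converges to 4/π, where (x)_k denotes the rising factorial x(x+1)⋯(x+k−1). -/
open Filter Real

/-- Rising factorial (Pochhammer symbol) `(x)_k = x(x+1)⋯(x+k-1)`. -/
noncomputable def poch (x : ℝ) : ℕ → ℝ
  | 0 => 1
  | k + 1 => poch x k * (x + k)

namespace RamanujanWZ

open Finset

/-- The base hypergeometric term. -/
noncomputable def bb (n k : ℕ) : ℝ :=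
  poch (1/2) k ^ 3 * poch (1/2) n ^ 2 /
    ((4 : ℝ) ^ k * (k.factorial : ℝ) * ((n + k).factorial : ℝ) ^ 2)

/-- The WZ function: `∑ k, FF n k = 4/π` for every `n`. -/
noncomputable def FF (n k : ℕ) : ℝ := (6 * k + 4 * n + 1) * bb n k

/-- The WZ certificate. -/
noncomputable def HH (n k : ℕ) : ℝ := 8 * k * bb n k

lemma poch_pos (k : ℕ) : 0 < poch (1/2) k := by
  induction k with
  | zero => norm_num [poch]
  | succ k ih =>
      rw [poch]
      have : (0:ℝ) < 1/2 + k := by positivity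
      positivity

lemma poch_le_factorial (k : ℕ) : poch (1/2) k ≤ (k.factorial : ℝ) := by
  induction k with
  | zero => norm_num [poch]
  | succ k ih =>
      rw [poch, Nat.factorial_succ]
      push_cast
      have h2 : (0:ℝ) < 1/2 + k := by positivity
      have h3 : (0:ℝ) ≤ (k.factorial : ℝ) := by positivity
      calc poch (1/2) k * (1/2 + k) ≤ (k.factorial : ℝ) * (1/2 + k) :=
            mul_le_mul_of_nonneg_right ih h2.le
        _ ≤ (k + 1) * (k.factorial : ℝ) := by nlinarith

lemma bb_pos (n k : ℕ) : 0 < bb n k := by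
  have h1 := poch_pos k
  have h2 := poch_pos n
  have h3 : (0:ℝ) < (k.factorial : ℝ) := by exact_mod_cast k.factorial_pos
  have h4 : (0:ℝ) < ((n+k).factorial : ℝ) := by exact_mod_cast (n+k).factorial_pos
  rw [bb]; positivity

lemma FF_nonneg (n k : ℕ) : 0 ≤ FF n k := by
  have := bb_pos n k
  rw [FF]; positivity

/-- The WZ identity. -/
lemma wz (n k : ℕ) : FF n k - FF (n + 1) k = HH n k - HH n (k + 1) := by
  have hfnk : ((n + 1 + k).factorial : ℝ) = ((n:ℝ) + k + 1) * ((n + k).factorial : ℝ) := by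
    have h : n + 1 + k = (n + k) + 1 := by ring
    rw [h, Nat.factorial_succ]; push_cast; ring
  have hfnk2 : ((n + (k + 1)).factorial : ℝ) = ((n:ℝ) + k + 1) * ((n + k).factorial : ℝ) := by
    have h : n + (k + 1) = (n + k) + 1 := by ring
    rw [h, Nat.factorial_succ]; push_cast; ring
  have hfk : (((k+1)).factorial : ℝ) = ((k:ℝ) + 1) * (k.factorial : ℝ) := by
    rw [Nat.factorial_succ]; push_cast; ring
  have hpn : poch (1/2) (n+1) = poch (1/2) n * (1/2 + n) := rfl
  have hpk : poch (1/2) (k+1) = poch (1/2) k * (1/2 + k) := rfl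
  have hk0 : (k.factorial : ℝ) ≠ 0 := by positivity
  have hnk0 : ((n + k).factorial : ℝ) ≠ 0 := by positivity
  have h40 : ((4:ℝ)) ^ k ≠ 0 := by positivity
  have hnk1 : ((n:ℝ) + k + 1) ≠ 0 := by positivity
  have hk1 : ((k:ℝ) + 1) ≠ 0 := by positivity
  simp only [FF, HH, bb, hpn, hpk]
  rw [hfnk, hfnk2, hfk, pow_succ]
  push_cast
  field_simp
  ring

lemma HH_zero (n : ℕ) : HH n 0 = 0 := by simp [HH]

lemma sum_range_wz (n N : ℕ) :
    ∑ k ∈ range N, FF n k - ∑ k ∈ range N, FF (n+1) k = -HH n N := by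
  have h1 : ∑ k ∈ range N, FF n k - ∑ k ∈ range N, FF (n+1) k
      = ∑ k ∈ range N, (HH n k - HH n (k+1)) := by
    rw [← Finset.sum_sub_distrib]
    exact Finset.sum_congr rfl fun k _ => wz n k
  rw [h1, Finset.sum_range_sub' (fun k => HH n k) N, HH_zero]
  ring

lemma bb_le (n k : ℕ) : bb n k ≤ (n.factorial : ℝ) ^ 2 * (1/4) ^ k := by
  have hP := poch_le_factorial k
  have hQ := poch_le_factorial n
  have hPp := poch_pos k
  have hQp := poch_pos n
  have hkf : (0:ℝ) < (k.factorial : ℝ) := by exact_mod_cast k.factorial_pos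
  have hnkf : (0:ℝ) < ((n+k).factorial : ℝ) := by exact_mod_cast (n+k).factorial_pos
  have hkle : (k.factorial : ℝ) ≤ ((n+k).factorial : ℝ) := by
    exact_mod_cast Nat.factorial_le (Nat.le_add_left k n)
  have hnum : poch (1/2) k ^ 3 * poch (1/2) n ^ 2
      ≤ (k.factorial : ℝ) * ((n+k).factorial : ℝ) ^ 2 * ((n.factorial : ℝ) ^ 2) := by
    have h1 : poch (1/2) k ^ 3 ≤ (k.factorial : ℝ) ^ 3 := by
      exact pow_le_pow_left₀ hPp.le hP 3
    have h2 : poch (1/2) n ^ 2 ≤ (n.factorial : ℝ) ^ 2 := by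
      exact pow_le_pow_left₀ hQp.le hQ 2
    have h3 : (k.factorial : ℝ) ^ 3 ≤ (k.factorial : ℝ) * ((n+k).factorial : ℝ) ^ 2 := by
      have h4 : (k.factorial : ℝ)^2 ≤ ((n+k).factorial : ℝ)^2 := by
        exact pow_le_pow_left₀ hkf.le hkle 2
      nlinarith
    nlinarith [pow_pos hPp 3, pow_pos hQp 2, pow_pos hkf 3]
  have hrhs : (n.factorial : ℝ) ^ 2 * (1/4) ^ k
      = ((k.factorial : ℝ) * ((n+k).factorial : ℝ)^2 * ((n.factorial : ℝ)^2))
        / ((4:ℝ)^k * (k.factorial : ℝ) * ((n+k).factorial : ℝ)^2) := by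
    rw [div_pow, one_pow]
    field_simp
  rw [bb, hrhs]
  have hden : (0:ℝ) < (4:ℝ)^k * (k.factorial : ℝ) * ((n+k).factorial : ℝ)^2 := by positivity
  exact (div_le_div_iff_of_pos_right hden).mpr hnum

/-- Key tail bound: `bb n (k+1) ≤ (k+1)² (1/4)^(k+1) / (n+1)²`. -/
lemma bb_succ_le (n k : ℕ) :
    bb n (k+1) ≤ ((k:ℝ) + 1) ^ 2 * (1/4) ^ (k+1) / ((n:ℝ) + 1) ^ 2 := by
  have hP := poch_le_factorial (k+1)
  have hQ := poch_le_factorial n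
  have hPp := poch_pos (k+1)
  have hQp := poch_pos n
  have hkf : (0:ℝ) < ((k+1).factorial : ℝ) := by exact_mod_cast (k+1).factorial_pos
  have hkf' : (0:ℝ) < (k.factorial : ℝ) := by exact_mod_cast k.factorial_pos
  have hnf : (0:ℝ) < (n.factorial : ℝ) := by exact_mod_cast n.factorial_pos
  have hnkf : (0:ℝ) < ((n+(k+1)).factorial : ℝ) := by exact_mod_cast (n+(k+1)).factorial_pos
  -- (n+1)! * k! ≤ (n+k+1)!
  have hdvd' : (n+1).factorial * k.factorial ∣ (n + (k+1)).factorial := by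
    have h := Nat.factorial_mul_factorial_dvd_factorial_add (n+1) k
    have he : n + 1 + k = n + (k + 1) := by omega
    rwa [he] at h
  have hdvd : ((n+1).factorial : ℝ) * (k.factorial : ℝ) ≤ ((n+(k+1)).factorial : ℝ) := by
    exact_mod_cast Nat.le_of_dvd (n + (k+1)).factorial_pos hdvd'
  have step1 : bb n (k+1) ≤
      (((k+1).factorial : ℝ)^3 * (n.factorial : ℝ)^2)
        / ((4:ℝ)^(k+1) * ((k+1).factorial : ℝ) * (((n+1).factorial : ℝ) * (k.factorial : ℝ))^2) := by
    rw [bb]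
    apply div_le_div₀ (by positivity)
    · have h1 : poch (1/2) (k+1) ^ 3 ≤ ((k+1).factorial : ℝ) ^ 3 :=
        pow_le_pow_left₀ hPp.le hP 3
      have h2 : poch (1/2) n ^ 2 ≤ (n.factorial : ℝ) ^ 2 :=
        pow_le_pow_left₀ hQp.le hQ 2
      nlinarith [pow_pos hPp 3, pow_pos hQp 2]
    · positivity
    · have h5 : (((n+1).factorial : ℝ) * (k.factorial : ℝ))^2 ≤ ((n+(k+1)).factorial : ℝ)^2 :=
        pow_le_pow_left₀ (by positivity) hdvd 2
      have h6 : (0:ℝ) < (4:ℝ)^(k+1) * ((k+1).factorial : ℝ) := by positivity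
      nlinarith
  refine step1.trans (le_of_eq ?_)
  have hfk : (((k+1)).factorial : ℝ) = ((k:ℝ) + 1) * (k.factorial : ℝ) := by
    rw [Nat.factorial_succ]; push_cast; ring
  have hfn : (((n+1)).factorial : ℝ) = ((n:ℝ) + 1) * (n.factorial : ℝ) := by
    rw [Nat.factorial_succ]; push_cast; ring
  rw [hfk, hfn]
  have hk1 : ((k:ℝ) + 1) ≠ 0 := by positivity
  have hn1 : ((n:ℝ) + 1) ≠ 0 := by positivity
  have h4 : ((4:ℝ))^(k+1) ≠ 0 := by positivity
  field_simp
  rw [← mul_pow]; norm_num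

lemma summable_cube : Summable (fun k : ℕ => ((k : ℝ) + 1) ^ 3 * (1/4) ^ (k+1)) := by
  have h : Summable (fun k : ℕ => (k : ℝ) ^ 3 * (1/4 : ℝ) ^ k) := by
    apply summable_pow_mul_geometric_of_norm_lt_one
    rw [Real.norm_eq_abs, abs_lt]; constructor <;> norm_num
  have h2 := (summable_nat_add_iff 1).mpr h
  apply h2.congr
  intro k
  push_cast
  ring

lemma summable_FF (n : ℕ) : Summable (FF n) := by
  have hgeo : Summable (fun k : ℕ => (k : ℝ) * (1/4 : ℝ) ^ k) := by
    have := summable_pow_mul_geometric_of_norm_lt_one (R := ℝ) 1 (r := 1/4)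
      (by rw [Real.norm_eq_abs, abs_lt]; constructor <;> norm_num)
    simpa using this
  have hgeo2 : Summable (fun k : ℕ => (1/4 : ℝ) ^ k) :=
    summable_geometric_of_lt_one (by norm_num) (by norm_num)
  have hbig : Summable (fun k : ℕ =>
      (6 * (k:ℝ) + 4 * n + 1) * ((n.factorial : ℝ)^2 * (1/4)^k)) := by
    have he : (fun k : ℕ => (6 * (k:ℝ) + 4 * n + 1) * ((n.factorial : ℝ)^2 * (1/4)^k))
        = (fun k : ℕ => (6 * (n.factorial : ℝ)^2) * ((k:ℝ) * (1/4)^k)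
            + ((4*n+1) * (n.factorial : ℝ)^2) * ((1/4:ℝ)^k)) := by
      funext k; ring
    rw [he]
    exact ((hgeo.mul_left _).add (hgeo2.mul_left _))
  apply Summable.of_nonneg_of_le (FF_nonneg n) ?_ hbig
  intro k
  rw [FF]
  have h1 : (0:ℝ) ≤ 6 * (k:ℝ) + 4 * n + 1 := by positivity
  exact mul_le_mul_of_nonneg_left (bb_le n k) h1

/-- The sum of the WZ function. -/
noncomputable def S (n : ℕ) : ℝ := ∑' k, FF n k

lemma HH_tendsto_zero (n : ℕ) : Tendsto (fun N => HH n N) atTop (nhds 0) := by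
  have hb : ∀ N : ℕ, HH n N ≤ (8 * (n.factorial : ℝ)^2) * ((N:ℝ) * (1/4)^N) := by
    intro N
    rw [HH]
    have h1 : (0:ℝ) ≤ 8 * (N:ℝ) := by positivity
    calc (8:ℝ) * N * bb n N ≤ 8 * N * ((n.factorial : ℝ)^2 * (1/4)^N) :=
          mul_le_mul_of_nonneg_left (bb_le n N) h1
      _ = (8 * (n.factorial : ℝ)^2) * ((N:ℝ) * (1/4)^N) := by ring
  have hg : Tendsto (fun N : ℕ => (N:ℝ) * (1/4)^N) atTop (nhds 0) := by
    have : Summable (fun k : ℕ => (k : ℝ) * (1/4 : ℝ) ^ k) := by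
      have := summable_pow_mul_geometric_of_norm_lt_one (R := ℝ) 1 (r := 1/4)
        (by rw [Real.norm_eq_abs, abs_lt]; constructor <;> norm_num)
      simpa using this
    exact this.tendsto_atTop_zero
  have hg2 : Tendsto (fun N : ℕ => (8 * (n.factorial : ℝ)^2) * ((N:ℝ) * (1/4)^N))
      atTop (nhds 0) := by
    have := hg.const_mul (8 * (n.factorial : ℝ)^2)
    simpa using this
  apply squeeze_zero (fun N => ?_) hb hg2
  have := bb_pos n N
  rw [HH]; positivity

lemma S_succ (n : ℕ) : S (n + 1) = S n := by
  have h1 : Tendsto (fun N => ∑ k ∈ range N, FF n k) atTop (nhds (S n)) :=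
    (summable_FF n).hasSum.tendsto_sum_nat
  have h2 : Tendsto (fun N => ∑ k ∈ range N, FF (n+1) k) atTop (nhds (S (n+1))) :=
    (summable_FF (n+1)).hasSum.tendsto_sum_nat
  have h3 : Tendsto (fun N => ∑ k ∈ range N, FF n k - ∑ k ∈ range N, FF (n+1) k)
      atTop (nhds (S n - S (n+1))) := h1.sub h2
  have h4 : Tendsto (fun N => ∑ k ∈ range N, FF n k - ∑ k ∈ range N, FF (n+1) k)
      atTop (nhds 0) := by
    have he : (fun N => ∑ k ∈ range N, FF n k - ∑ k ∈ range N, FF (n+1) k)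
        = fun N => -HH n N := by
      funext N; exact sum_range_wz n N
    rw [he]
    simpa using (HH_tendsto_zero n).neg
  have := tendsto_nhds_unique h3 h4
  linarith

lemma S_eq_S_zero (n : ℕ) : S n = S 0 := by
  induction n with
  | zero => rfl
  | succ n ih => rw [S_succ, ih]

/-- Wallis: `(2n+1) * ((1/2)_n / n!)² → 2/π`, phrased for `FF n 0`. -/
lemma poch_half_eq (n : ℕ) : poch (1/2) n * ((4:ℝ)^n * (n.factorial : ℝ)) = ((2*n).factorial : ℝ) := by
  induction n with
  | zero => norm_num [poch]
  | succ n ih =>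
      have h1 : 2 * (n + 1) = (2*n + 1) + 1 := by ring
      rw [poch, h1, Nat.factorial_succ, Nat.factorial_succ, Nat.factorial_succ]
      push_cast
      have h40 : ((4:ℝ))^n ≠ 0 := by positivity
      have hnf : ((n.factorial : ℝ)) ≠ 0 := by positivity
      have ihr : poch (1/2) n = ((2*n).factorial : ℝ) / ((4:ℝ)^n * (n.factorial : ℝ)) := by
        field_simp at ih ⊢
        linarith [ih]
      rw [pow_succ, ihr]
      push_cast
      field_simp
      ring

lemma FF_zero_tendsto : Tendsto (fun n => FF n 0) atTop (nhds (4 / π)) := by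
  have hW : ∀ n : ℕ, FF n 0 = (Real.Wallis.W n)⁻¹ * ((4*(n:ℝ)+1) / (2*(n:ℝ)+1)) := by
    intro n
    have hw := Real.Wallis.W_eq_factorial_ratio n
    have h2 : ((2*n).factorial : ℝ) = poch (1/2) n * ((4:ℝ)^n * (n.factorial : ℝ)) :=
      (poch_half_eq n).symm
    have hnf : ((n.factorial : ℝ)) ≠ 0 := by positivity
    have h2n1 : (2*(n:ℝ)+1) ≠ 0 := by positivity
    have h4n : ((4:ℝ))^n ≠ 0 := by positivity
    have h24 : ((2:ℝ))^(4*n) = ((4:ℝ)^n)^2 := by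
      rw [show (4:ℝ) = 2^2 by norm_num, ← pow_mul, ← pow_mul]
      congr 1
      ring
    have hpp := poch_pos n
    rw [FF, bb]
    simp only [Nat.add_zero, Nat.cast_zero, Nat.factorial_zero, pow_zero, Nat.cast_one]
    rw [show poch (1/2) 0 = (1:ℝ) from rfl, hw, h2, h24]
    field_simp
    ring
  have hWt : Tendsto (fun n : ℕ => (Real.Wallis.W n)⁻¹) atTop (nhds (2/π)) := by
    have h := Real.Wallis.tendsto_W_nhds_pi_div_two
    have hne : (π/2 : ℝ) ≠ 0 := by positivity
    have := h.inv₀ hne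
    convert this using 2
    rw [inv_div]
  have hrat : Tendsto (fun n : ℕ => (4*(n:ℝ)+1) / (2*(n:ℝ)+1)) atTop (nhds 2) := by
    have hb : ∀ n : ℕ, (4*(n:ℝ)+1) / (2*(n:ℝ)+1) = 2 - 1/(2*(n:ℝ)+1) := by
      intro n
      have : (2*(n:ℝ)+1) ≠ 0 := by positivity
      field_simp
      ring
    have hz : Tendsto (fun n : ℕ => 1/(2*(n:ℝ)+1)) atTop (nhds 0) := by
      apply squeeze_zero (fun n => by positivity) (fun n => ?_)
        tendsto_one_div_add_atTop_nhds_zero_nat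
      apply div_le_div_of_nonneg_left (by norm_num) (by positivity)
      push_cast; linarith [Nat.cast_nonneg (α := ℝ) n]
    have := (tendsto_const_nhds (x := (2:ℝ)) (f := atTop (α := ℕ))).sub hz
    simp only [sub_zero] at this
    apply Tendsto.congr (fun n => (hb n).symm) this
  have := hWt.mul hrat
  have he : (2/π : ℝ) * 2 = 4/π := by ring
  rw [he] at this
  exact Tendsto.congr (fun n => (hW n).symm) this

lemma tail_tendsto_zero :
    Tendsto (fun n => ∑' k, FF n (k+1)) atTop (nhds 0) := by
  set T : ℝ := ∑' k : ℕ, ((k : ℝ) + 1) ^ 3 * (1/4) ^ (k+1) with hT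
  have hTnn : 0 ≤ T := tsum_nonneg (fun k => by positivity)
  have hsum : ∀ n : ℕ, Summable (fun k => FF n (k+1)) :=
    fun n => (summable_nat_add_iff 1).mpr (summable_FF n)
  have hbound : ∀ n : ℕ, ∑' k, FF n (k+1) ≤ (7 / ((n:ℝ)+1)) * T := by
    intro n
    have hle : ∀ k : ℕ, FF n (k+1) ≤ (7 / ((n:ℝ)+1)) * (((k:ℝ)+1)^3 * (1/4)^(k+1)) := by
      intro k
      rw [FF]
      have hb := bb_succ_le n k
      have hbpos := bb_pos n (k+1)
      have hc : (6 * ((k:ℕ):ℝ) + 4 * n + 7) ≤ 7 * ((n:ℝ)+1) * ((k:ℝ)+1) := by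
        have hk := Nat.cast_nonneg (α := ℝ) k
        have hn := Nat.cast_nonneg (α := ℝ) n
        nlinarith
      have hcast : (6 * ((k+1:ℕ):ℝ) + 4 * n + 1) = 6 * (k:ℝ) + 4 * n + 7 := by
        push_cast; ring
      rw [hcast]
      have h1 : (0:ℝ) ≤ 6 * (k:ℝ) + 4 * n + 7 := by positivity
      calc (6 * (k:ℝ) + 4 * n + 7) * bb n (k+1)
          ≤ (7 * ((n:ℝ)+1) * ((k:ℝ)+1)) * (((k:ℝ) + 1) ^ 2 * (1/4) ^ (k+1) / ((n:ℝ) + 1) ^ 2) := by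
            apply mul_le_mul hc hb hbpos.le (by positivity)
        _ = (7 / ((n:ℝ)+1)) * (((k:ℝ)+1)^3 * (1/4)^(k+1)) := by
            have : ((n:ℝ)+1) ≠ 0 := by positivity
            field_simp
    calc ∑' k, FF n (k+1)
        ≤ ∑' k : ℕ, (7 / ((n:ℝ)+1)) * (((k:ℝ)+1)^3 * (1/4)^(k+1)) :=
          Summable.tsum_le_tsum hle (hsum n) (summable_cube.mul_left _)
      _ = (7 / ((n:ℝ)+1)) * T := by rw [tsum_mul_left]
  have hz : Tendsto (fun n : ℕ => (7 / ((n:ℝ)+1)) * T) atTop (nhds 0) := by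
    have h1 : Tendsto (fun n : ℕ => (7:ℝ) / ((n:ℝ)+1)) atTop (nhds 0) := by
      have := tendsto_one_div_add_atTop_nhds_zero_nat.const_mul (7:ℝ)
      simp only [mul_zero] at this
      apply Tendsto.congr ?_ this
      intro n; rw [mul_one_div]
    have := h1.mul_const T
    simpa using this
  apply squeeze_zero (fun n => tsum_nonneg (fun k => FF_nonneg n (k+1))) hbound hz

lemma S_zero_eq : S 0 = 4 / π := by
  have hconst : Tendsto (fun n : ℕ => S n) atTop (nhds (S 0)) := by
    have he : (fun n : ℕ => S n) = fun _ => S 0 := funext S_eq_S_zero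
    rw [he]; exact tendsto_const_nhds
  have hsplit : ∀ n : ℕ, S n = FF n 0 + ∑' k, FF n (k+1) := by
    intro n
    rw [S]
    exact Summable.tsum_eq_zero_add (summable_FF n)
  have hlim : Tendsto (fun n : ℕ => S n) atTop (nhds (4/π)) := by
    have := FF_zero_tendsto.add tail_tendsto_zero
    simp only [add_zero] at this
    exact Tendsto.congr (fun n => (hsplit n).symm) this
  exact tendsto_nhds_unique hconst hlim

end RamanujanWZ

theorem ramanujan_series :
    Tendsto (fun n : ℕ => ∑ k ∈ Finset.range n,
      (6 * (k : ℝ) + 1) * (poch (1/2) k) ^ 3 / ((k.factorial : ℝ) ^ 3 * 4 ^ k))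
      atTop (nhds (4 / π)) := by
  have h : Tendsto (fun n => ∑ k ∈ Finset.range n, RamanujanWZ.FF 0 k) atTop
      (nhds (RamanujanWZ.S 0)) := (RamanujanWZ.summable_FF 0).hasSum.tendsto_sum_nat
  rw [RamanujanWZ.S_zero_eq] at h
  apply Tendsto.congr ?_ h
  intro N
  apply Finset.sum_congr rfl
  intro k _
  rw [RamanujanWZ.FF, RamanujanWZ.bb]
  have hpoch0 : poch (1/2) 0 = 1 := rfl
  rw [hpoch0]
  simp only [Nat.cast_zero, Nat.zero_add, Nat.zero_add]
  have hk0 : (k.factorial : ℝ) ≠ 0 := by positivity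
  have h40 : ((4:ℝ))^k ≠ 0 := by positivity
  field_simp
  ring
end

section
/- The double series ∑_{k=1}^∞ (4k+1) · (−1/2)_k · ((1/2)_k)^3 / ((k+1)! · k!^3) · ∑_{i=1}^{2k} (−1)^{i−1}/i^2 converges to 2/3 − 8/π^2. -/
open Filter Real

lemma poch_zero (x : ℝ) : poch x 0 = 1 := rfl

lemma poch_succ (x : ℝ) (k : ℕ) : poch x (k + 1) = poch x k * (x + k) := rfl

/-- `(-1/2)_{k+1} = -(1/2) * (1/2)_k`. -/
lemma poch_half_shift (k : ℕ) : poch (-1/2) (k + 1) = -(1/2) * poch (1/2) k := by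
  induction k with
  | zero => norm_num [poch]
  | succ n ih =>
    rw [poch_succ, ih, poch_succ]
    push_cast
    ring

/-- auxiliary sequences -/
noncomputable def wq (n : ℕ) : ℝ := (2 * (n : ℝ) + 1) * (poch (1/2) n / (n.factorial : ℝ)) ^ 2

noncomputable def Hn (n : ℕ) : ℝ := ∑ i ∈ Finset.Icc 1 (2 * n), (-1 : ℝ) ^ (i - 1) / (i : ℝ) ^ 2

lemma Hn_succ (n : ℕ) :
    Hn (n + 1) = Hn n + 1 / (2 * (n : ℝ) + 1) ^ 2 - 1 / (2 * (n : ℝ) + 2) ^ 2 := by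
  have h : 2 * (n + 1) = (2 * n + 1) + 1 := by ring
  rw [Hn, h, Finset.sum_Icc_succ_top (by omega), Finset.sum_Icc_succ_top (by omega)]
  have e0 : (2 * n + 1) - 1 = 2 * n := by omega
  have e1 : (2 * n + 1 + 1) - 1 = 2 * n + 1 := by omega
  rw [e0, e1]
  have p0 : (-1 : ℝ) ^ (2 * n) = 1 := by
    rw [pow_mul]; norm_num
  have p1 : (-1 : ℝ) ^ (2 * n + 1) = -1 := by
    rw [pow_succ, p0]; norm_num
  rw [p0, p1, Hn]
  push_cast
  ring

lemma factorial_ne_zero_real (n : ℕ) : ((n.factorial : ℝ)) ≠ 0 := by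
  exact_mod_cast n.factorial_ne_zero

set_option maxHeartbeats 1600000 in
/-- The closed form of the partial sums. -/
lemma closed_form (n : ℕ) :
    ∑ k ∈ Finset.Icc 1 n,
      (4 * (k : ℝ) + 1) * poch (-1/2) k * (poch (1/2) k) ^ 3 /
          (((k+1).factorial : ℝ) * (k.factorial : ℝ) ^ 3) *
        ∑ i ∈ Finset.Icc 1 (2 * k), (-1 : ℝ) ^ (i - 1) / (i : ℝ) ^ 2
    = (16 * ((n : ℝ) + 1) ^ 3 / ((2 * (n : ℝ) + 1) * (2 * (n : ℝ) + 3) ^ 2)) * (wq (n + 1)) ^ 2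
        * Hn n
      - (4 * (n : ℝ) / (2 * (n : ℝ) + 1)) * (wq n) ^ 2 := by
  induction n with
  | zero =>
    simp [Hn, wq]
  | succ n ih =>
    rw [Finset.sum_Icc_succ_top (by omega), ih]
    have hHn1 : (∑ i ∈ Finset.Icc 1 (2 * (n+1)), (-1 : ℝ) ^ (i - 1) / (i : ℝ) ^ 2) = Hn (n+1) := rfl
    rw [hHn1, Hn_succ n]
    rw [poch_half_shift n]
    simp only [wq, poch_half_shift, poch_succ, Nat.factorial_succ]
    have hf : ((n.factorial : ℝ)) ≠ 0 := factorial_ne_zero_real n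
    have h1 : ((n : ℝ) + 1) ≠ 0 := by positivity
    have h2 : ((n : ℝ) + 2) ≠ 0 := by positivity
    have h3 : (2 * (n : ℝ) + 1) ≠ 0 := by positivity
    have h4 : (2 * (n : ℝ) + 2) ≠ 0 := by positivity
    have h5 : (2 * (n : ℝ) + 3) ≠ 0 := by positivity
    have h6 : (2 * (n : ℝ) + 5) ≠ 0 := by positivity
    push_cast
    field_simp
    ring

lemma poch_half_eq (n : ℕ) :
    poch (1/2) n * (4 ^ n * (n.factorial : ℝ)) = ((2 * n).factorial : ℝ) := by
  induction n with
  | zero => simp [poch]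
  | succ n ih =>
    have h : 2 * (n + 1) = (2 * n + 1) + 1 := by ring
    rw [poch_succ, h, Nat.factorial_succ, Nat.factorial_succ, Nat.factorial_succ]
    push_cast
    push_cast at ih
    linear_combination ((1/2 + (n : ℝ)) * 4 * ((n : ℝ) + 1)) * ih

lemma wq_mul_W (n : ℕ) : wq n * Real.Wallis.W n = 1 := by
  have hp := poch_half_eq n
  have hf : ((n.factorial : ℝ)) ≠ 0 := factorial_ne_zero_real n
  have hf2 : (((2 * n).factorial : ℝ)) ≠ 0 := factorial_ne_zero_real (2 * n)
  have h4 : ((4 : ℝ) ^ n) ≠ 0 := by positivity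
  have h3 : (2 * (n : ℝ) + 1) ≠ 0 := by positivity
  have hpoch : poch (1/2) n = ((2 * n).factorial : ℝ) / (4 ^ n * (n.factorial : ℝ)) := by
    field_simp [← hp]
    linear_combination hp
  have h2pow : (2 : ℝ) ^ (4 * n) = (4 : ℝ) ^ n * (4 : ℝ) ^ n := by
    rw [pow_mul, show ((2:ℝ) ^ 4) = 4 * 4 by norm_num, mul_pow]
  rw [wq, hpoch, Real.Wallis.W_eq_factorial_ratio, h2pow]
  field_simp

lemma tendsto_wq : Tendsto wq atTop (nhds (2 / π)) := by
  have hW := Real.tendsto_prod_pi_div_two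
  have hWinv : Tendsto (fun k => (Real.Wallis.W k)⁻¹) atTop (nhds ((π / 2)⁻¹)) :=
    hW.inv₀ (by positivity)
  have : (π / 2)⁻¹ = 2 / π := by
    rw [inv_div]
  rw [this] at hWinv
  refine hWinv.congr fun n => ?_
  have hW0 : Real.Wallis.W n ≠ 0 := ne_of_gt (Real.Wallis.W_pos n)
  field_simp
  linarith [wq_mul_W n]

lemma sum_Icc_one_div_sq (n : ℕ) :
    ∑ i ∈ Finset.Icc 1 n, (1 : ℝ) / (i : ℝ) ^ 2
      = ∑ i ∈ Finset.range (n + 1), (1 : ℝ) / (i : ℝ) ^ 2 := by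
  induction n with
  | zero => simp
  | succ n ih => rw [Finset.sum_Icc_succ_top (by omega), ih, ← Finset.sum_range_succ]

lemma tendsto_Icc_basel :
    Tendsto (fun n : ℕ => ∑ i ∈ Finset.Icc 1 n, (1 : ℝ) / (i : ℝ) ^ 2) atTop
      (nhds (π ^ 2 / 6)) := by
  have h := hasSum_zeta_two.tendsto_sum_nat
  have h2 : Tendsto (fun n : ℕ => ∑ i ∈ Finset.range (n + 1), (1 : ℝ) / (i : ℝ) ^ 2) atTop
      (nhds (π ^ 2 / 6)) := h.comp (tendsto_add_atTop_nat 1)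
  exact h2.congr fun n => (sum_Icc_one_div_sq n).symm

lemma Hn_split (n : ℕ) :
    Hn n = (∑ i ∈ Finset.Icc 1 (2 * n), (1 : ℝ) / (i : ℝ) ^ 2)
      - (1/2) * ∑ i ∈ Finset.Icc 1 n, (1 : ℝ) / (i : ℝ) ^ 2 := by
  induction n with
  | zero => simp [Hn]
  | succ n ih =>
    have h : 2 * (n + 1) = (2 * n + 1) + 1 := by ring
    rw [Hn_succ, ih, h, Finset.sum_Icc_succ_top (a := 1) (by omega),
      Finset.sum_Icc_succ_top (a := 1) (by omega), Finset.sum_Icc_succ_top (a := 1) (by omega)]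
    have h4 : (2 * (n : ℝ) + 2) ≠ 0 := by positivity
    have h1 : ((n : ℝ) + 1) ≠ 0 := by positivity
    have h3 : (2 * (n : ℝ) + 1) ≠ 0 := by positivity
    push_cast
    field_simp
    ring

lemma tendsto_Hn : Tendsto Hn atTop (nhds (π ^ 2 / 12)) := by
  have h2n : Tendsto (fun n : ℕ => 2 * n) atTop atTop :=
    tendsto_atTop_mono (fun n => by simpa using (by omega : n ≤ 2 * n)) tendsto_id
  have hE := tendsto_Icc_basel
  have hE2 : Tendsto (fun n : ℕ => ∑ i ∈ Finset.Icc 1 (2 * n), (1 : ℝ) / (i : ℝ) ^ 2) atTop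
      (nhds (π ^ 2 / 6)) := hE.comp h2n
  have := hE2.sub (hE.const_mul (1/2))
  have hval : π ^ 2 / 6 - 1/2 * (π ^ 2 / 6) = π ^ 2 / 12 := by ring
  rw [hval] at this
  exact this.congr fun n => (Hn_split n).symm

lemma tendsto_inv_nat : Tendsto (fun n : ℕ => 1 / (n : ℝ)) atTop (nhds 0) :=
  tendsto_one_div_atTop_nhds_zero_nat

lemma tendsto_r1 :
    Tendsto (fun n : ℕ => 16 * ((n : ℝ) + 1) ^ 3 / ((2 * (n : ℝ) + 1) * (2 * (n : ℝ) + 3) ^ 2))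
      atTop (nhds 2) := by
  have h0 := tendsto_inv_nat
  have hnum : Tendsto (fun n : ℕ => 16 * (1 + 1 / (n : ℝ)) ^ 3) atTop (nhds (16 * (1 + 0) ^ 3)) :=
    (((tendsto_const_nhds (x := (1:ℝ))).add h0).pow 3).const_mul 16
  have hden : Tendsto (fun n : ℕ => (2 + 1 / (n : ℝ)) * (2 + 3 * (1 / (n : ℝ))) ^ 2) atTop
      (nhds ((2 + 0) * (2 + 3 * 0) ^ 2)) :=
    ((tendsto_const_nhds (x := (2:ℝ))).add h0).mul
      (((tendsto_const_nhds (x := (2:ℝ))).add (h0.const_mul 3)).pow 2)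
  have hq := hnum.div hden (by norm_num)
  have hval : 16 * ((1:ℝ) + 0) ^ 3 / ((2 + 0) * (2 + 3 * 0) ^ 2) = 2 := by norm_num
  rw [hval] at hq
  refine hq.congr' ?_
  filter_upwards [eventually_ge_atTop 1] with n hn
  have hn0 : (n : ℝ) ≠ 0 := Nat.cast_ne_zero.mpr (by omega)
  rw [Pi.div_apply]
  field_simp

lemma tendsto_r2 :
    Tendsto (fun n : ℕ => 4 * (n : ℝ) / (2 * (n : ℝ) + 1)) atTop (nhds 2) := by
  have h0 := tendsto_inv_nat
  have hq : Tendsto (fun n : ℕ => 4 / (2 + 1 / (n : ℝ))) atTop (nhds (4 / (2 + 0))) :=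
    (tendsto_const_nhds (x := (4:ℝ))).div ((tendsto_const_nhds (x := (2:ℝ))).add h0)
      (by norm_num)
  have hval : (4 : ℝ) / (2 + 0) = 2 := by norm_num
  rw [hval] at hq
  refine hq.congr' ?_
  filter_upwards [eventually_ge_atTop 1] with n hn
  have hn0 : (n : ℝ) ≠ 0 := Nat.cast_ne_zero.mpr (by omega)
  field_simp

theorem thm_2_3_1 :
    Tendsto (fun n : ℕ => ∑ k ∈ Finset.Icc 1 n,
      (4 * (k : ℝ) + 1) * poch (-1/2) k * (poch (1/2) k) ^ 3 /
          (((k+1).factorial : ℝ) * (k.factorial : ℝ) ^ 3) *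
        ∑ i ∈ Finset.Icc 1 (2 * k), (-1 : ℝ) ^ (i - 1) / (i : ℝ) ^ 2)
      atTop (nhds (2/3 - 8 / π ^ 2)) := by
  have hw := tendsto_wq
  have hw1 : Tendsto (fun n : ℕ => wq (n + 1)) atTop (nhds (2 / π)) :=
    hw.comp (tendsto_add_atTop_nat 1)
  have hmain :
      Tendsto (fun n : ℕ =>
        (16 * ((n : ℝ) + 1) ^ 3 / ((2 * (n : ℝ) + 1) * (2 * (n : ℝ) + 3) ^ 2)) * (wq (n + 1)) ^ 2
          * Hn n
        - (4 * (n : ℝ) / (2 * (n : ℝ) + 1)) * (wq n) ^ 2) atTop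
        (nhds (2 * (2 / π) ^ 2 * (π ^ 2 / 12) - 2 * (2 / π) ^ 2)) :=
    ((tendsto_r1.mul (hw1.pow 2)).mul tendsto_Hn).sub (tendsto_r2.mul (hw.pow 2))
  have hval : 2 * (2 / π) ^ 2 * (π ^ 2 / 12) - 2 * (2 / π) ^ 2 = 2/3 - 8 / π ^ 2 := by
    have hpi : (π : ℝ) ≠ 0 := Real.pi_ne_zero
    field_simp
    ring
  rw [hval] at hmain
  exact hmain.congr fun n => (closed_form n).symm
end
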